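/- arXiv:2202.11036 — 2 statements merged into one kernel-verified Lean document; each statement's English description precedes it below -/
import Mathlib

section
/- Let (X_k)_{k≥1} be independent nonnegative random variables on a probability space (Ω, 𝓕, ℙ), let λ > 0, and assume 𝔼[e^{−λ X_k}] ≤ 1/2 for every k ≥ 1. Set S_n = X₁ + ⋯ + X_n and define the counting process N(t) = inf{n ≥ 1 : S_n ≥ t} (with inf ∅ = ∞). Then for every b with 0 < b < log 2 there exists a constant C < ∞ depending only on b such that for all t ≥ 0, N(t) is almost surely finite and 𝔼[e^{b N(t)}] ≤ C e^{λt}. -/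
open MeasureTheory ProbabilityTheory

/-- **Exponential moments of the counting process of restarts** (Proposition 3.4, abstract form).
Let `(X k)` be independent nonnegative random variables on a probability space,
`lam > 0`, with `E[exp (−lam * X k)] ≤ 1/2` for every `k`. Put `S n = X 0 + ⋯ + X (n-1)`
and `N t = inf {n ≥ 1 : S n ≥ t}` (with `inf ∅ = ∞`). Then for every `0 < b < log 2`
there is a constant `C` depending only on `b` such that for all `t ≥ 0`, `N t` is almost
surely finite and `E[exp (b * N t)] ≤ C * exp (lam * t)`. -/
theorem exp_moment_counting_process
    {Ω : Type*} [MeasurableSpace Ω] (P : Measure Ω) [IsProbabilityMeasure P]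
    (X : ℕ → Ω → ℝ)
    (hmeas : ∀ k, Measurable (X k))
    (hnonneg : ∀ k ω, 0 ≤ X k ω)
    (hindep : iIndepFun X P)
    (lam : ℝ) (hlam : 0 < lam)
    (hlap : ∀ k, ∫ ω, Real.exp (-lam * X k ω) ∂P ≤ 1 / 2)
    (S : ℕ → Ω → ℝ) (hS : ∀ n ω, S n ω = ∑ k ∈ Finset.range n, X k ω)
    (N : ℝ → Ω → ℕ∞)
    (hN : ∀ t ω, N t ω = sInf {m : ℕ∞ | ∃ n : ℕ, 1 ≤ n ∧ t ≤ S n ω ∧ m = (n : ℕ∞)}) :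
    ∀ b : ℝ, 0 < b → b < Real.log 2 →
      ∃ C : ℝ, ∀ t : ℝ, 0 ≤ t →
        (∀ᵐ ω ∂P, N t ω < ⊤) ∧
        ∫ ω, Real.exp (b * ((N t ω).toNat : ℝ)) ∂P ≤ C * Real.exp (lam * t) := by
  intro b hb hblt
  have h2 : Real.exp b < 2 := by
    calc Real.exp b < Real.exp (Real.log 2) := Real.exp_lt_exp.mpr hblt
    _ = 2 := Real.exp_log two_pos
  set r : ℝ := Real.exp b / 2 with hr_def
  have hr0 : 0 ≤ r := by positivity
  have hr1 : r < 1 := by rw [hr_def]; linarith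
  refine ⟨Real.exp b * (1 - r)⁻¹, ?_⟩
  intro t ht
  -- basic facts about S
  have hSfun : ∀ n : ℕ, S n = fun ω => ∑ k ∈ Finset.range n, X k ω := fun n => funext (hS n)
  have hSmeas : ∀ n, Measurable (S n) := by
    intro n; rw [hSfun n]; exact Finset.measurable_sum _ (fun k _ => hmeas k)
  have hSnn : ∀ n ω, 0 ≤ S n ω := fun n ω => by
    rw [hS]; exact Finset.sum_nonneg fun k _ => hnonneg k ω
  have hSmono : ∀ (ω : Ω) ⦃m n : ℕ⦄, m ≤ n → S m ω ≤ S n ω := by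
    intro ω m n hmn
    rw [hS m ω, hS n ω]
    exact Finset.sum_le_sum_of_subset_of_nonneg (Finset.range_subset_range.mpr hmn)
      (fun k _ _ => hnonneg k ω)
  have hS0 : ∀ ω, S 0 ω = 0 := fun ω => by simp [hS 0 ω]
  -- Chernoff bound
  have hint : ∀ n : ℕ, Integrable (fun ω => Real.exp (-lam * S n ω)) P := by
    intro n
    refine (integrable_const (1:ℝ)).mono'
      (((hSmeas n).const_mul (-lam)).exp.aestronglyMeasurable) ?_
    filter_upwards with ω
    rw [Real.norm_eq_abs, abs_of_pos (Real.exp_pos _)]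
    apply Real.exp_le_one_iff.mpr
    have := hSnn n ω
    nlinarith
  have hCher : ∀ n : ℕ, (P {ω | S n ω ≤ t}).toReal ≤ Real.exp (lam * t) * (1/2)^n := by
    intro n
    have h1 := measure_le_le_exp_mul_mgf (X := S n) (μ := P) (t := -lam) t
      (by linarith) (hint n)
    rw [neg_neg] at h1
    refine h1.trans ?_
    have hsum : (fun ω => ∑ k ∈ Finset.range n, X k ω) = ∑ k ∈ Finset.range n, X k := by
      funext ω; simp
    have hmgf : mgf (S n) P (-lam) = ∏ k ∈ Finset.range n, mgf (X k) P (-lam) := by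
      rw [hSfun n, hsum, hindep.mgf_sum hmeas]
    rw [hmgf]
    have hprod : ∏ k ∈ Finset.range n, mgf (X k) P (-lam) ≤ (1/2:ℝ)^n := by
      calc ∏ k ∈ Finset.range n, mgf (X k) P (-lam)
          ≤ ∏ _k ∈ Finset.range n, (1/2:ℝ) := by
            refine Finset.prod_le_prod (fun k _ => mgf_nonneg) (fun k _ => ?_)
            have : mgf (X k) P (-lam) = ∫ ω, Real.exp (-lam * X k ω) ∂P := rfl
            rw [this]; exact hlap k
        _ = (1/2:ℝ)^n := by rw [Finset.prod_const, Finset.card_range]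
    exact mul_le_mul_of_nonneg_left hprod (Real.exp_pos _).le
  have hD : ∀ n : ℕ, P {ω | S n ω ≤ t} ≤ ENNReal.ofReal (Real.exp (lam*t) * (1/2)^n) := by
    intro n
    rw [← ENNReal.ofReal_toReal (measure_ne_top P _)]
    exact ENNReal.ofReal_le_ofReal (hCher n)
  -- a.s. finiteness
  have hfin : ∀ᵐ ω ∂P, N t ω < ⊤ := by
    rw [ae_iff]
    have hsub : ∀ n : ℕ, {ω | ¬ N t ω < ⊤} ⊆ {ω | S (n+1) ω ≤ t} := by
      intro n ω hω
      simp only [Set.mem_setOf_eq, not_lt, top_le_iff] at hω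
      by_contra hc
      simp only [Set.mem_setOf_eq, not_le] at hc
      have hle : N t ω ≤ ((n+1 : ℕ) : ℕ∞) := by
        rw [hN]
        exact sInf_le ⟨n+1, Nat.succ_le_succ (Nat.zero_le n), hc.le, rfl⟩
      rw [hω, top_le_iff] at hle
      exact ENat.coe_ne_top (n+1) hle
    have hle : ∀ n : ℕ, P {ω | ¬ N t ω < ⊤}
        ≤ ENNReal.ofReal (Real.exp (lam*t) * (1/2)^(n+1)) :=
      fun n => (measure_mono (hsub n)).trans (hD (n+1))
    have htend : Filter.Tendsto
        (fun n : ℕ => ENNReal.ofReal (Real.exp (lam*t) * (1/2)^(n+1)))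
        Filter.atTop (nhds 0) := by
      rw [← ENNReal.ofReal_zero]
      apply ENNReal.tendsto_ofReal
      have h1 : Filter.Tendsto (fun n : ℕ => (1/2:ℝ)^n) Filter.atTop (nhds 0) :=
        tendsto_pow_atTop_nhds_zero_of_lt_one (by norm_num) (by norm_num)
      have h2 := (h1.comp (Filter.tendsto_add_atTop_nat 1)).const_mul (Real.exp (lam*t))
      simpa [Function.comp] using h2
    exact le_antisymm (ge_of_tendsto' htend hle) zero_le
  refine ⟨hfin, ?_⟩
  -- the ℕ-valued hitting time
  set Tset : Ω → Set ℕ := fun ω => {n : ℕ | 1 ≤ n ∧ t ≤ S n ω} with hTset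
  have hup : ∀ ω (k₁ k₂ : ℕ), k₁ ≤ k₂ → k₁ ∈ Tset ω → k₂ ∈ Tset ω := by
    intro ω k₁ k₂ h hk
    rw [hTset] at hk ⊢
    exact ⟨hk.1.trans h, hk.2.trans (hSmono ω h)⟩
  set M : Ω → ℕ := fun ω => sInf (Tset ω) with hM
  have hMω : ∀ ω, M ω = sInf (Tset ω) := fun ω => by rw [hM]
  have hMN : ∀ ω, (N t ω).toNat = M ω := by
    intro ω
    rcases (Tset ω).eq_empty_or_nonempty with he | hne
    · have hset : {m : ℕ∞ | ∃ n : ℕ, 1 ≤ n ∧ t ≤ S n ω ∧ m = (n : ℕ∞)} = ∅ := by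
        ext m
        simp only [Set.mem_setOf_eq, Set.mem_empty_iff_false, iff_false, not_exists]
        rintro n ⟨h1, h2, rfl⟩
        have : n ∈ Tset ω := by rw [hTset]; exact ⟨h1, h2⟩
        rw [he] at this
        exact this
      rw [hN, hset, sInf_empty, hMω, he]
      simp
    · have hmem : M ω ∈ Tset ω := by rw [hMω]; exact Nat.sInf_mem hne
      rw [hTset] at hmem
      have hNeq : N t ω = (M ω : ℕ∞) := by
        rw [hN]
        apply le_antisymm
        · exact sInf_le ⟨M ω, hmem.1, hmem.2, rfl⟩
        · refine le_sInf ?_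
          rintro m ⟨n, h1, h2, rfl⟩
          have hn : n ∈ Tset ω := by rw [hTset]; exact ⟨h1, h2⟩
          have : M ω ≤ n := by rw [hMω]; exact Nat.sInf_le hn
          exact_mod_cast this
      rw [hNeq]
      simp
  -- measurability
  have hTmeas : ∀ n : ℕ, MeasurableSet {ω | n ∈ Tset ω} := by
    intro n
    match n with
    | 0 =>
      have : {ω | (0:ℕ) ∈ Tset ω} = ∅ := by
        ext ω; simp [hTset]
      rw [this]; exact MeasurableSet.empty
    | n+1 =>
      have : {ω | (n+1:ℕ) ∈ Tset ω} = {ω | t ≤ S (n+1) ω} := by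
        ext ω; simp [hTset, Nat.succ_le_succ (Nat.zero_le n)]
      rw [this]; exact measurableSet_le measurable_const (hSmeas (n+1))
  have hMmeas : Measurable M := by
    apply measurable_to_countable'
    intro m
    match m with
    | 0 =>
      have : M ⁻¹' {0} = ⋂ n, {ω | n ∈ Tset ω}ᶜ := by
        ext ω
        simp only [Set.mem_preimage, Set.mem_singleton_iff, Set.mem_iInter,
          Set.mem_compl_iff, Set.mem_setOf_eq, hMω]
        rw [Nat.sInf_eq_zero]
        constructor
        · rintro (h0 | he)
          · rw [hTset] at h0
            exact absurd h0.1 (by norm_num)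
          · intro n hn; rw [he] at hn; exact hn
        · intro h; right; ext n; simp [h n]
      rw [this]; exact MeasurableSet.iInter fun n => (hTmeas n).compl
    | m+1 =>
      have : M ⁻¹' {m+1} = {ω | (m+1:ℕ) ∈ Tset ω} ∩ {ω | (m:ℕ) ∈ Tset ω}ᶜ := by
        ext ω
        simp only [Set.mem_preimage, Set.mem_singleton_iff, Set.mem_inter_iff,
          Set.mem_compl_iff, Set.mem_setOf_eq, hMω]
        exact Nat.sInf_upward_closed_eq_succ_iff (fun k₁ k₂ h hk => hup ω k₁ k₂ h hk) m
      rw [this]; exact (hTmeas (m+1)).inter (hTmeas m).compl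
  have hgmeas : Measurable (fun ω => Real.exp (b * ((M ω : ℕ) : ℝ))) := by
    have h1 : Measurable (fun ω => ((M ω : ℕ) : ℝ)) := measurable_from_top.comp hMmeas
    exact (h1.const_mul b).exp
  -- rewrite the integrand
  have hfe : ∫ ω, Real.exp (b * ((N t ω).toNat : ℝ)) ∂P
      = ∫ ω, Real.exp (b * ((M ω : ℕ) : ℝ)) ∂P := by
    congr 1; funext ω; rw [hMN ω]
  rw [hfe, integral_eq_lintegral_of_nonneg_ae (ae_of_all _ fun ω => (Real.exp_pos _).le)
    hgmeas.aestronglyMeasurable]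
  have hC0 : (0:ℝ) ≤ Real.exp b * (1 - r)⁻¹ * Real.exp (lam * t) :=
    mul_nonneg (mul_nonneg (Real.exp_pos _).le (inv_nonneg.mpr (by linarith)))
      (Real.exp_pos _).le
  apply ENNReal.toReal_le_of_le_ofReal hC0
  have hDmeas : ∀ n : ℕ, MeasurableSet {ω | S n ω ≤ t} :=
    fun n => measurableSet_le (hSmeas n) measurable_const
  calc ∫⁻ ω, ENNReal.ofReal (Real.exp (b * ((M ω : ℕ) : ℝ))) ∂P
      ≤ ∫⁻ ω, ∑' n : ℕ, ENNReal.ofReal (Real.exp b ^ (n+1))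
          * Set.indicator {ω' | S n ω' ≤ t} 1 ω ∂P := by
        apply lintegral_mono
        intro ω
        set n₀ : ℕ := M ω - 1 with hn₀
        have hωD : ω ∈ {ω' | S n₀ ω' ≤ t} := by
          rcases Nat.eq_zero_or_pos (M ω) with h0 | hpos
          · have : n₀ = 0 := by omega
            simp only [Set.mem_setOf_eq, this, hS0 ω]
            exact ht
          · have hnotin : n₀ ∉ Tset ω := by
              apply Nat.notMem_of_lt_sInf
              rw [← hMω]; omega
            rcases Nat.eq_zero_or_pos n₀ with hz | hp
            · simp only [Set.mem_setOf_eq, hz, hS0 ω]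
              exact ht
            · rw [hTset] at hnotin
              simp only [Set.mem_setOf_eq, not_and, not_le] at hnotin
              exact (hnotin hp).le
        calc ENNReal.ofReal (Real.exp (b * ((M ω : ℕ) : ℝ)))
            ≤ ENNReal.ofReal (Real.exp b ^ (n₀+1))
                * Set.indicator {ω' | S n₀ ω' ≤ t} 1 ω := by
              rw [Set.indicator_of_mem hωD, Pi.one_apply, mul_one]
              apply ENNReal.ofReal_le_ofReal
              rw [mul_comm, Real.exp_nat_mul]
              exact pow_le_pow_right₀ (Real.one_le_exp hb.le) (by omega)
          _ ≤ ∑' n : ℕ, ENNReal.ofReal (Real.exp b ^ (n+1))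
                * Set.indicator {ω' | S n ω' ≤ t} 1 ω := ENNReal.le_tsum n₀
    _ = ∑' n : ℕ, ENNReal.ofReal (Real.exp b ^ (n+1)) * P {ω | S n ω ≤ t} := by
        rw [lintegral_tsum (f := fun (n : ℕ) (ω : Ω) => ENNReal.ofReal (Real.exp b ^ (n+1))
            * Set.indicator {ω' | S n ω' ≤ t} 1 ω) (fun n =>
          ((measurable_const.indicator (hDmeas n)).const_mul _).aemeasurable)]
        congr 1
        funext n
        rw [lintegral_const_mul _ (measurable_one.indicator (hDmeas n)),
          lintegral_indicator_one (hDmeas n)]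
    _ ≤ ∑' n : ℕ, ENNReal.ofReal (Real.exp b ^ (n+1))
          * ENNReal.ofReal (Real.exp (lam*t) * (1/2)^n) :=
        ENNReal.tsum_le_tsum fun n => mul_le_mul_right (hD n) _
    _ = ∑' n : ℕ, ENNReal.ofReal (Real.exp (lam*t) * (Real.exp b * r^n)) := by
        congr 1
        funext n
        rw [← ENNReal.ofReal_mul (by positivity)]
        congr 1
        rw [hr_def, div_pow, pow_succ]
        field_simp
        rw [one_pow, mul_one, ← mul_pow]; congr 1; ring
    _ = ENNReal.ofReal (∑' n : ℕ, Real.exp (lam*t) * (Real.exp b * r^n)) := by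
        rw [ENNReal.ofReal_tsum_of_nonneg
          (fun n => mul_nonneg (Real.exp_pos _).le
            (mul_nonneg (Real.exp_pos _).le (pow_nonneg hr0 n)))
          (((summable_geometric_of_lt_one hr0 hr1).mul_left _).mul_left _)]
    _ = ENNReal.ofReal (Real.exp b * (1 - r)⁻¹ * Real.exp (lam * t)) := by
        congr 1
        rw [tsum_mul_left, tsum_mul_left, tsum_geometric_of_lt_one hr0 hr1]
        ring
end

section
/- Let m ∈ ℝ, let a ≤ b be real numbers, let φ : [a,b] → ℝ be differentiable, and let g, ψ : [a,b] → ℝ be continuous with ψ ≥ 0, such that for all t ∈ [a,b]: φ'(t) + 2m φ(t) + ψ(t) ≤ 2 g(t) φ(t). Then for all a ≤ t' ≤ t ≤ b: φ(t) + ∫_{t'}^{t} exp(−2m(t − r) + 2∫_r^t g(u) du) · ψ(r) dr ≤ exp(−2m(t − t') + 2∫_{t'}^{t} g(u) du) · φ(t'). -/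
open MeasureTheory intervalIntegral

/-- **Grönwall-type energy estimate** (analytic core of Proposition 3.1).
Let `m ∈ ℝ`, `a ≤ b`, let `φ : [a,b] → ℝ` be differentiable with derivative `φ'`, and let
`g, ψ : [a,b] → ℝ` be continuous with `ψ ≥ 0`, such that for all `t ∈ [a,b]`
`φ' t + 2 m φ t + ψ t ≤ 2 g t * φ t`. Then for all `a ≤ t' ≤ t ≤ b`,
`φ t + ∫_{t'}^{t} exp (−2m(t−r) + 2∫_r^t g) * ψ r dr
  ≤ exp (−2m(t−t') + 2∫_{t'}^t g) * φ t'`. -/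
theorem gronwall_energy_estimate
    (m a b : ℝ) (hab : a ≤ b) (φ φ' g ψ : ℝ → ℝ)
    (hφ : ∀ t ∈ Set.Icc a b, HasDerivWithinAt φ (φ' t) (Set.Icc a b) t)
    (hg : ContinuousOn g (Set.Icc a b))
    (hψ : ContinuousOn ψ (Set.Icc a b))
    (hψ0 : ∀ t ∈ Set.Icc a b, 0 ≤ ψ t)
    (hineq : ∀ t ∈ Set.Icc a b, φ' t + 2 * m * φ t + ψ t ≤ 2 * g t * φ t) :
    ∀ t' t : ℝ, a ≤ t' → t' ≤ t → t ≤ b →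
      φ t + ∫ r in t'..t,
          Real.exp (-2 * m * (t - r) + 2 * ∫ u in r..t, g u) * ψ r
        ≤ Real.exp (-2 * m * (t - t') + 2 * ∫ u in t'..t, g u) * φ t' := by
  intro t' t ht' htt' htb
  have ht'mem : t' ∈ Set.Icc a b := ⟨ht', htt'.trans htb⟩
  have htmem : t ∈ Set.Icc a b := ⟨ht'.trans htt', htb⟩
  -- the antiderivative of g
  set G : ℝ → ℝ := fun r => ∫ u in a..r, g u with hGdef
  have hgint : ∀ r ∈ Set.Icc a b, IntervalIntegrable g volume a r := by
    intro r hr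
    exact (hg.mono (by rw [Set.uIcc_of_le hr.1]; exact Set.Icc_subset_Icc le_rfl hr.2)).intervalIntegrable
  have hgmeas : ∀ r ∈ Set.Ioo a b, StronglyMeasurableAtFilter g (nhds r) volume := by
    intro r hr
    exact ⟨Set.Icc a b, Icc_mem_nhds hr.1 hr.2, hg.aestronglyMeasurable measurableSet_Icc⟩
  have hGderiv : ∀ r ∈ Set.Ioo a b, HasDerivAt G (g r) r := by
    intro r hr
    exact integral_hasDerivAt_right (hgint r (Set.Ioo_subset_Icc_self hr)) (hgmeas r hr)
      ((hg r (Set.Ioo_subset_Icc_self hr)).continuousAt (Icc_mem_nhds hr.1 hr.2))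
  have hGcont : ContinuousOn G (Set.Icc a b) := by
    have := continuousOn_primitive_interval (μ := volume) (f := g) (a := a) (b := b)
      ((hg.mono (by rw [Set.uIcc_of_le hab])).integrableOn_compact (by rw [Set.uIcc_of_le hab]; exact isCompact_Icc))
    rwa [Set.uIcc_of_le hab] at this
  -- the integrating factor
  set E : ℝ → ℝ := fun r => Real.exp (2 * m * r - 2 * G r) with hEdef
  have hEpos : ∀ r, 0 < E r := fun r => Real.exp_pos _
  have hEderiv : ∀ r ∈ Set.Ioo a b, HasDerivAt E (E r * (2 * m - 2 * g r)) r := by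
    intro r hr
    have h1 : HasDerivAt (fun r => 2 * m * r - 2 * G r) (2 * m - 2 * g r) r := by
      simpa [Pi.sub_def] using ((hasDerivAt_id r).const_mul (2 * m)).sub ((hGderiv r hr).const_mul 2)
    simpa [hEdef] using h1.exp
  have hEcont : ContinuousOn E (Set.Icc a b) := by
    apply Real.continuous_exp.comp_continuousOn
    exact (continuousOn_const.mul continuousOn_id).sub (continuousOn_const.mul hGcont)
  -- the primitive of E * ψ
  have hEψcont : ContinuousOn (fun r => E r * ψ r) (Set.Icc a b) := hEcont.mul hψ
  have hEψint : ∀ r ∈ Set.Icc a b, IntervalIntegrable (fun r => E r * ψ r) volume a r := by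
    intro r hr
    exact (hEψcont.mono (by rw [Set.uIcc_of_le hr.1]; exact Set.Icc_subset_Icc le_rfl hr.2)).intervalIntegrable
  set P : ℝ → ℝ := fun r => ∫ u in a..r, E u * ψ u with hPdef
  have hPderiv : ∀ r ∈ Set.Ioo a b, HasDerivAt P (E r * ψ r) r := by
    intro r hr
    exact integral_hasDerivAt_right (hEψint r (Set.Ioo_subset_Icc_self hr))
      ⟨Set.Icc a b, Icc_mem_nhds hr.1 hr.2, hEψcont.aestronglyMeasurable measurableSet_Icc⟩
      ((hEψcont r (Set.Ioo_subset_Icc_self hr)).continuousAt (Icc_mem_nhds hr.1 hr.2))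
  have hPcont : ContinuousOn P (Set.Icc a b) := by
    have := continuousOn_primitive_interval (μ := volume) (f := fun r => E r * ψ r) (a := a) (b := b)
      ((hEψcont.mono (by rw [Set.uIcc_of_le hab])).integrableOn_compact
        (by rw [Set.uIcc_of_le hab]; exact isCompact_Icc))
    rwa [Set.uIcc_of_le hab] at this
  have hφcont : ContinuousOn φ (Set.Icc a b) := fun r hr => (hφ r hr).continuousWithinAt
  -- the Lyapunov function
  set H : ℝ → ℝ := fun r => E r * φ r + P r with hHdef
  have hHderiv : ∀ r ∈ Set.Ioo a b,
      HasDerivAt H (E r * (2 * m - 2 * g r) * φ r + E r * φ' r + E r * ψ r) r := by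
    intro r hr
    have hφr : HasDerivAt φ (φ' r) r :=
      (hφ r (Set.Ioo_subset_Icc_self hr)).hasDerivAt (Icc_mem_nhds hr.1 hr.2)
    exact (((hEderiv r hr).mul hφr)).add (hPderiv r hr)
  have hHcont : ContinuousOn H (Set.Icc a b) := (hEcont.mul hφcont).add hPcont
  have hHanti : AntitoneOn H (Set.Icc a b) := by
    apply antitoneOn_of_deriv_nonpos (convex_Icc a b) hHcont
    · intro r hr
      rw [interior_Icc] at hr
      exact ((hHderiv r hr).differentiableAt).differentiableWithinAt
    · intro r hr
      rw [interior_Icc] at hr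
      rw [(hHderiv r hr).deriv]
      have h := hineq r (Set.Ioo_subset_Icc_self hr)
      nlinarith [hEpos r]
  have key : H t ≤ H t' := hHanti ht'mem htmem htt'
  -- multiply by c
  set c : ℝ := Real.exp (-(2 * m * t) + 2 * G t) with hcdef
  have hcpos : 0 < c := Real.exp_pos _
  have hcEt : c * E t = 1 := by
    rw [hcdef, hEdef, ← Real.exp_add]; ring_nf; exact Real.exp_zero
  have hGsub : ∀ r ∈ Set.Icc a b, G t - G r = ∫ u in r..t, g u := fun r hr =>
    integral_interval_sub_left (hgint t htmem) (hgint r hr)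
  have hcE : ∀ r ∈ Set.Icc a b,
      c * E r = Real.exp (-2 * m * (t - r) + 2 * ∫ u in r..t, g u) := by
    intro r hr
    rw [hcdef, hEdef, ← Real.exp_add, ← hGsub r hr]
    ring_nf
  -- rewrite the integral in the goal
  have hsub : Set.uIcc t' t ⊆ Set.Icc a b := by
    rw [Set.uIcc_of_le htt']; exact Set.Icc_subset_Icc ht' htb
  have hint_eq : (∫ r in t'..t, Real.exp (-2 * m * (t - r) + 2 * ∫ u in r..t, g u) * ψ r)
      = c * (P t - P t') := by
    rw [hPdef]
    rw [integral_interval_sub_left (hEψint t htmem) (hEψint t' ht'mem)]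
    rw [← intervalIntegral.integral_const_mul]
    apply intervalIntegral.integral_congr
    intro r hr
    simp only [← mul_assoc, hcE r (hsub hr)]
  rw [hint_eq, ← hcE t' ht'mem]
  -- conclude from `key`
  have h2 : c * H t ≤ c * H t' := by
    exact mul_le_mul_of_nonneg_left key hcpos.le
  rw [hHdef] at h2
  simp only at h2
  rw [mul_add, mul_add, ← mul_assoc, ← mul_assoc, hcEt, one_mul] at h2
  rw [mul_sub]
  linarith
end
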